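/- arXiv:1610.02763 — 2 statements merged into one kernel-verified Lean document; each statement's English description precedes it below -/
import Mathlib

section
/- Let X be a nonempty set, (f_n) a pointwise bounded sequence of real-valued functions on X, and Y ⊆ X. Assume that for every g in the σ-convex hull co_σ{f_n : n ≥ 1} (i.e. every function g = Σ λ_n f_n with λ_n ≥ 0 and Σ λ_n = 1, the series converging pointwise absolutely) there exists y ∈ Y with g(y) = inf_X g. Then inf over X of (liminf_n f_n) equals inf over Y of (liminf_n f_n). -/
set_option maxHeartbeats 1000000
open Filter

lemma simons_fubini (c : ℕ → ℝ) (ν : ℕ → ℕ → ℝ) (hc : ∀ j, 0 ≤ c j)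
    (hcs : Summable c) (hν0 : ∀ j k, 0 ≤ ν j k) (hν1 : ∀ j, HasSum (ν j) 1) :
    HasSum (fun k => ∑' j, c j * ν j k) (∑' j, c j) := by
  set g : ℕ × ℕ → ℝ := fun p => c p.1 * ν p.1 p.2 with hg
  have hg0 : 0 ≤ g := fun p => mul_nonneg (hc _) (hν0 _ _)
  have hfib : ∀ j, Summable fun k => g (j, k) := fun j => ((hν1 j).summable).mul_left (c j)
  have htj : ∀ j, (∑' k, g (j, k)) = c j := by
    intro j
    simp only [hg]
    rw [tsum_mul_left, (hν1 j).tsum_eq, mul_one]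
  have hgs : Summable g := by
    rw [summable_prod_of_nonneg hg0]
    refine ⟨hfib, ?_⟩
    simpa only [htj] using hcs
  have htot : HasSum g (∑' j, c j) := by
    have h1 := hgs.hasSum
    have h2 : (∑' p : ℕ × ℕ, g p) = ∑' j, c j := by
      rw [Summable.tsum_prod' hgs hfib]
      exact tsum_congr htj
    rwa [h2] at h1
  have htot2 : HasSum (fun p : ℕ × ℕ => g p.swap) (∑' j, c j) :=
    ((Equiv.prodComm ℕ ℕ).hasSum_iff).2 htot
  refine htot2.prod_fiberwise fun k => ?_
  have : Summable fun j => g (j, k) := by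
    refine Summable.of_nonneg_of_le (fun j => hg0 _) (fun j => ?_) hcs
    have h1 : ν j k ≤ 1 := le_hasSum (hν1 j) k fun i _ => hν0 j i
    calc c j * ν j k ≤ c j * 1 := by nlinarith [hc j, hν0 j k]
    _ = c j := mul_one _
  exact this.hasSum

section Flem
variable {X : Type*} (f : ℕ → X → ℝ)

lemma simons_summable {μ : ℕ → ℝ} (hμ0 : ∀ k, 0 ≤ μ k) (hμs : Summable μ)
    {z : X} {M : ℝ} (hM : ∀ n, |f n z| ≤ M) : Summable fun k => μ k * f k z := by
  have habs : Summable fun k => |μ k * f k z| := by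
    refine Summable.of_nonneg_of_le (fun k => abs_nonneg _) (fun k => ?_) (hμs.mul_right M)
    rw [abs_mul, abs_of_nonneg (hμ0 k)]
    exact mul_le_mul_of_nonneg_left (hM k) (hμ0 k)
  exact habs.of_abs

lemma simons_abs_le {μ : ℕ → ℝ} (hμ0 : ∀ k, 0 ≤ μ k) (hμs : Summable μ)
    {z : X} {M : ℝ} (hM : ∀ n, |f n z| ≤ M) :
    |∑' k, μ k * f k z| ≤ (∑' k, μ k) * M := by
  have hsum : Summable fun k => μ k * f k z := by
    have habs : Summable fun k => |μ k * f k z| := by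
      refine Summable.of_nonneg_of_le (fun k => abs_nonneg _) (fun k => ?_) (hμs.mul_right M)
      rw [abs_mul, abs_of_nonneg (hμ0 k)]
      exact mul_le_mul_of_nonneg_left (hM k) (hμ0 k)
    exact habs.of_abs
  have h3 : (∑' k, μ k * M) = (∑' k, μ k) * M := tsum_mul_right
  rw [abs_le]
  constructor
  · have : (∑' k, (-(μ k * M))) ≤ ∑' k, μ k * f k z := by
      refine Summable.tsum_le_tsum (fun k => ?_) ((hμs.mul_right M).neg) hsum
      have := (abs_le.1 (hM k)).1
      nlinarith [hμ0 k]
    rw [tsum_neg, h3] at this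
    linarith
  · have : (∑' k, μ k * f k z) ≤ ∑' k, μ k * M := by
      refine Summable.tsum_le_tsum (fun k => ?_) hsum (hμs.mul_right M)
      have := (abs_le.1 (hM k)).2
      nlinarith [hμ0 k]
    linarith

lemma simons_add {μ ν : ℕ → ℝ} (hμ0 : ∀ k, 0 ≤ μ k) (hμs : Summable μ)
    (hν0 : ∀ k, 0 ≤ ν k) (hνs : Summable ν) {z : X} {M : ℝ} (hM : ∀ n, |f n z| ≤ M) :
    ∑' k, (μ k + ν k) * f k z = (∑' k, μ k * f k z) + ∑' k, ν k * f k z := by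
  rw [← Summable.tsum_add (simons_summable f hμ0 hμs hM) (simons_summable f hν0 hνs hM)]
  exact tsum_congr fun k => by ring

lemma simons_smul (c : ℝ) (μ : ℕ → ℝ) (z : X) :
    ∑' k, (c * μ k) * f k z = c * ∑' k, μ k * f k z := by
  rw [← tsum_mul_left]
  exact tsum_congr fun k => by ring
end Flem

set_option maxHeartbeats 1000000 in
lemma simons_key {X : Type*} [Nonempty X] (f : ℕ → X → ℝ)
    (hbdd : ∀ x : X, ∃ M : ℝ, ∀ n, |f n x| ≤ M) (Y : Set X)
    (hatt : ∀ g : X → ℝ, (∃ lam : ℕ → ℝ, (∀ n, 0 ≤ lam n) ∧ HasSum lam 1 ∧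
        ∀ x, HasSum (fun n => lam n * f n x) (g x)) →
      ∃ y ∈ Y, ∀ x : X, g y ≤ g x)
    (x : X) (ε : ℝ) (hε : 0 < ε) :
    ∃ y ∈ Y, liminf (fun n => f n y) atTop ≤ liminf (fun n => f n x) atTop + 4 * ε := by
  set L := liminf (fun n => f n x) atTop with hLdef
  obtain ⟨Mx, hMx⟩ := hbdd x
  -- frequently below L + ε
  have hfreq : ∀ m : ℕ, ∃ k, m ≤ k ∧ f k x < L + ε := by
    have hb1 : IsBoundedUnder (· ≤ ·) atTop (fun n => f n x) :=
      ⟨Mx, Filter.eventually_map.2 (Filter.Eventually.of_forall fun n => (abs_le.1 (hMx n)).2)⟩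
    have hfr := frequently_lt_of_liminf_lt (u := fun n => f n x)
      hb1.isCoboundedUnder_ge (lt_add_of_pos_right L hε)
    intro m
    rcases frequently_atTop.1 hfr m with ⟨k, hk1, hk2⟩
    exact ⟨k, hk1, hk2⟩
  -- weights and combinations
  set W : ℕ → (ℕ → ℝ) → Prop := fun n μ =>
    (∀ k, 0 ≤ μ k) ∧ (∀ k, μ k ≠ 0 → f k x < L + ε ∧ n ≤ k) ∧ HasSum μ 1 with hWdef
  set F : (ℕ → ℝ) → X → ℝ := fun μ z => ∑' k, μ k * f k z with hFdef
  have hsumm : ∀ (μ : ℕ → ℝ), (∀ k, 0 ≤ μ k) → Summable μ →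
      ∀ z, Summable fun k => μ k * f k z := by
    intro μ h0 hs z
    obtain ⟨M, hM⟩ := hbdd z
    exact simons_summable f h0 hs hM
  have hattF : ∀ (μ : ℕ → ℝ), (∀ k, 0 ≤ μ k) → HasSum μ 1 →
      ∃ y ∈ Y, ∀ z, F μ y ≤ F μ z := by
    intro μ h0 h1
    exact hatt (F μ) ⟨μ, h0, h1, fun z => (hsumm μ h0 h1.summable z).hasSum⟩
  have hiInf_le : ∀ (μ : ℕ → ℝ), (∀ k, 0 ≤ μ k) → HasSum μ 1 →
      ∀ z, (⨅ w, F μ w) ≤ F μ z := by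
    intro μ h0 h1 z
    obtain ⟨y, _, hy⟩ := hattF μ h0 h1
    exact ciInf_le ⟨F μ y, by rintro _ ⟨w, rfl⟩; exact hy w⟩ z
  have hFx_le : ∀ (μ : ℕ → ℝ), (∀ k, 0 ≤ μ k) → (∀ k, μ k ≠ 0 → f k x < L + ε) →
      HasSum μ 1 → F μ x ≤ L + ε := by
    intro μ h0 hsupp h1
    have hle : ∀ k, μ k * f k x ≤ μ k * (L + ε) := by
      intro k
      rcases eq_or_ne (μ k) 0 with h | h
      · simp [h]
      · exact mul_le_mul_of_nonneg_left (le_of_lt (hsupp k h)) (h0 k)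
    have h2 : F μ x ≤ ∑' k, μ k * (L + ε) :=
      Summable.tsum_le_tsum hle (hsumm μ h0 h1.summable x) (h1.summable.mul_right _)
    have h3 : (∑' k, μ k * (L + ε)) = L + ε := by
      rw [tsum_mul_right, h1.tsum_eq, one_mul]
    linarith
  set val : (ℕ → ℝ) → ℝ := fun ψ => min (⨅ z, F ψ z) (L + ε) with hvaldef
  set A : ℕ → (ℕ → ℝ) → Set ℝ := fun n Λ =>
    (fun ρ => val (fun k => Λ k + (2⁻¹ : ℝ) ^ n * ρ k)) '' {ρ | W (n + 1) ρ} with hAdef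
  have hAbdd : ∀ (n : ℕ) (Λ : ℕ → ℝ), ∀ a ∈ A n Λ, a ≤ L + ε := by
    rintro n Λ a ⟨ρ, hρ, rfl⟩
    exact min_le_right _ _
  have hpick : ∀ (n : ℕ) (Λ : ℕ → ℝ), ∃ μ : ℕ → ℝ, W (n + 1) μ ∧
      sSup (A n Λ) - ε * (4⁻¹ : ℝ) ^ n < val (fun k => Λ k + (2⁻¹ : ℝ) ^ n * μ k) := by
    intro n Λ
    have hne : (A n Λ).Nonempty := by
      obtain ⟨k0, hk0m, hk0S⟩ := hfreq (n + 1)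
      refine ⟨_, ⟨fun k => if k = k0 then 1 else 0, ?_, rfl⟩⟩
      refine ⟨fun k => by dsimp only; split <;> norm_num, fun k hk => ?_, ?_⟩
      · by_cases h : k = k0
        · subst h; exact ⟨hk0S, hk0m⟩
        · simp [h] at hk
      · exact hasSum_ite_eq k0 (1 : ℝ)
    have hlt : sSup (A n Λ) - ε * (4⁻¹ : ℝ) ^ n < sSup (A n Λ) :=
      sub_lt_self _ (by positivity)
    obtain ⟨a, ⟨ρ, hρ, rfl⟩, ha⟩ := exists_lt_of_lt_csSup hne hlt
    exact ⟨ρ, hρ, ha⟩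
  choose pick hpickW hpickV using hpick
  obtain ⟨Lam, hLam0, hLamS⟩ : ∃ Lam : ℕ → ℕ → ℝ, Lam 0 = (fun _ => 0) ∧
      ∀ n, Lam (n + 1) = fun k => Lam n k + (2⁻¹ : ℝ) ^ (n + 1) * pick n (Lam n) k :=
    ⟨fun n => Nat.rec (fun _ => (0 : ℝ))
      (fun n prev => fun k => prev k + (2⁻¹ : ℝ) ^ (n + 1) * pick n prev k) n,
      rfl, fun n => rfl⟩
  set mu : ℕ → ℕ → ℝ := fun n => pick n (Lam n) with hmudef
  have hmuW : ∀ n, W (n + 1) (mu n) := fun n => hpickW n (Lam n)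
  have hmuV : ∀ n, sSup (A n (Lam n)) - ε * (4⁻¹ : ℝ) ^ n <
      val (fun k => Lam n k + (2⁻¹ : ℝ) ^ n * mu n k) := fun n => hpickV n (Lam n)
  have hmu0 : ∀ n k, 0 ≤ mu n k := fun n k => (hmuW n).1 k
  have hmu1 : ∀ n, HasSum (mu n) 1 := fun n => (hmuW n).2.2
  have hmusupp : ∀ n k, mu n k ≠ 0 → f k x < L + ε ∧ n + 1 ≤ k := fun n => (hmuW n).2.1
  have hmule1 : ∀ n k, mu n k ≤ 1 := fun n k => le_hasSum (hmu1 n) k fun j _ => hmu0 n j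
  have hLamEq : ∀ n k, Lam n k = ∑ j ∈ Finset.range n, (2⁻¹ : ℝ) ^ (j + 1) * mu j k := by
    intro n
    induction n with
    | zero => intro k; simp [hLam0]
    | succ n ih =>
      intro k
      rw [hLamS n]
      simp only [Finset.sum_range_succ, ← ih k, hmudef]
      rw [ih k]
  have hgeo : Summable fun j : ℕ => (2⁻¹ : ℝ) ^ j :=
    summable_geometric_of_lt_one (by norm_num) (by norm_num)
  have hgeosum : (∑' j : ℕ, (2⁻¹ : ℝ) ^ j) = 2 := by
    rw [tsum_geometric_of_lt_one (by norm_num) (by norm_num)]; norm_num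
  set T : ℕ → ℕ → ℝ := fun n k => ∑' j, (2⁻¹ : ℝ) ^ (j + n + 1) * mu (j + n) k with hTdef
  have hcsumm : ∀ n : ℕ, Summable fun j : ℕ => (2⁻¹ : ℝ) ^ (j + n + 1) := by
    intro n
    refine Summable.congr (hgeo.mul_right ((2⁻¹ : ℝ) ^ (n + 1))) fun j => ?_
    ring
  have hTsummand : ∀ n k, Summable fun j => (2⁻¹ : ℝ) ^ (j + n + 1) * mu (j + n) k := by
    intro n k
    refine Summable.of_nonneg_of_le (fun j => mul_nonneg (by positivity) (hmu0 _ _))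
      (fun j => ?_) (hcsumm n)
    calc (2⁻¹ : ℝ) ^ (j + n + 1) * mu (j + n) k ≤ (2⁻¹ : ℝ) ^ (j + n + 1) * 1 :=
          mul_le_mul_of_nonneg_left (hmule1 _ _) (by positivity)
      _ = (2⁻¹ : ℝ) ^ (j + n + 1) := mul_one _
  have hTmass : ∀ n, HasSum (T n) ((2⁻¹ : ℝ) ^ n) := by
    intro n
    have hfub := simons_fubini (fun j => (2⁻¹ : ℝ) ^ (j + n + 1)) (fun j => mu (j + n))
      (fun j => by positivity) (hcsumm n) (fun j k => hmu0 _ _) (fun j => hmu1 _)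
    have hval : (∑' j : ℕ, (2⁻¹ : ℝ) ^ (j + n + 1)) = (2⁻¹ : ℝ) ^ n := by
      have h1 : (∑' j : ℕ, (2⁻¹ : ℝ) ^ (j + n + 1)) = ∑' j : ℕ, (2⁻¹:ℝ) ^ j * (2⁻¹:ℝ) ^ (n+1) := by
        refine tsum_congr fun j => ?_
        ring
      rw [h1, tsum_mul_right, hgeosum, pow_succ]
      ring
    rw [hval] at hfub
    exact hfub
  have hTnonneg : ∀ n k, 0 ≤ T n k :=
    fun n k => tsum_nonneg fun j => mul_nonneg (by positivity) (hmu0 _ _)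
  have hTsupp : ∀ n k, T n k ≠ 0 → f k x < L + ε ∧ n + 1 ≤ k := by
    intro n k hne
    by_contra hc
    apply hne
    have hzero : ∀ j : ℕ, (2⁻¹ : ℝ) ^ (j + n + 1) * mu (j + n) k = 0 := by
      intro j
      rcases eq_or_ne (mu (j + n) k) 0 with h0 | h0
      · rw [h0, mul_zero]
      · obtain ⟨hf, hk⟩ := hmusupp _ _ h0
        exact absurd ⟨hf, by omega⟩ hc
    calc T n k = ∑' j : ℕ, (0:ℝ) := tsum_congr hzero
      _ = 0 := tsum_zero
  have hTsplit : ∀ n k, T n k = (2⁻¹ : ℝ) ^ (n + 1) * mu n k + T (n + 1) k := by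
    intro n k
    have hs := hTsummand n k
    rw [hTdef]
    dsimp only
    rw [Summable.tsum_eq_zero_add hs]
    congr 1
    · norm_num
    · refine tsum_congr fun j => ?_
      rw [show j + 1 + n = j + (n + 1) from by omega]
  have hT0split : ∀ n k, T 0 k = Lam n k + T n k := by
    intro n k
    have hbase : Summable fun j => (2⁻¹ : ℝ) ^ (j + 1) * mu j k := hTsummand 0 k
    have := Summable.sum_add_tsum_nat_add (f := fun j => (2⁻¹ : ℝ) ^ (j + 1) * mu j k) n hbase
    rw [hLamEq n k]
    calc T 0 k = ∑' j : ℕ, (2⁻¹ : ℝ) ^ (j + 1) * mu j k := rfl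
      _ = _ := by rw [← this]
  have hT0mass : HasSum (T 0) 1 := by
    have h := hTmass 0
    rwa [pow_zero] at h
  have hpow : ∀ m : ℕ, (2:ℝ) ^ m * (2⁻¹:ℝ) ^ m = 1 := by
    intro m
    rw [← mul_pow]
    norm_num
  have hgeofin : ∀ n, ∑ j ∈ Finset.range n, (2⁻¹:ℝ) ^ (j+1) = 1 - (2⁻¹:ℝ) ^ n := by
    intro n
    induction n with
    | zero => simp
    | succ n ih => rw [Finset.sum_range_succ, ih, pow_succ]; ring
  have hLamMass : ∀ n, HasSum (Lam n) (1 - (2⁻¹:ℝ) ^ n) := by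
    intro n
    have h := hasSum_sum (s := Finset.range n) (f := fun j k => (2⁻¹:ℝ) ^ (j+1) * mu j k)
      (a := fun j => (2⁻¹:ℝ) ^ (j+1)) (fun j _ => by have h := (hmu1 j).mul_left ((2⁻¹:ℝ) ^ (j+1)); rwa [mul_one] at h)
    have hfn : (fun k => ∑ j ∈ Finset.range n, (2⁻¹:ℝ) ^ (j+1) * mu j k) = Lam n :=
      funext fun k => (hLamEq n k).symm
    rwa [hfn, hgeofin n] at h
  have hLam_nonneg : ∀ n k, 0 ≤ Lam n k := by
    intro n k
    rw [hLamEq n k]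
    exact Finset.sum_nonneg fun j _ => mul_nonneg (by positivity) (hmu0 j k)
  have hrhoW : ∀ n, W (n+1) (fun k => (2:ℝ) ^ n * T n k) := by
    intro n
    refine ⟨fun k => mul_nonneg (by positivity) (hTnonneg n k), fun k hk => ?_, ?_⟩
    · have hT : T n k ≠ 0 := by
        intro h0
        apply hk
        show (2:ℝ) ^ n * T n k = 0
        rw [h0, mul_zero]
      exact hTsupp n k hT
    · have h := (hTmass n).mul_left ((2:ℝ) ^ n)
      rwa [hpow n] at h
  obtain ⟨y, hyY, hymin⟩ := hattF (T 0) (hTnonneg 0) hT0mass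
  obtain ⟨B, hB⟩ := hbdd y
  have hIy : (⨅ w, F (T 0) w) = F (T 0) y :=
    le_antisymm (ciInf_le ⟨F (T 0) y, by rintro _ ⟨w, rfl⟩; exact hymin w⟩ y) (le_ciInf hymin)
  have hIleLε : F (T 0) y ≤ L + ε :=
    le_trans (hymin x) (hFx_le (T 0) (hTnonneg 0) (fun k h => (hTsupp 0 k h).1) hT0mass)
  -- the key chain of inequalities
  have hchain : ∀ n, F (T 0) y <
      F (fun k => Lam n k + (2⁻¹:ℝ) ^ n * mu n k) y + ε * (4⁻¹:ℝ) ^ n := by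
    intro n
    have hfun : (fun k => Lam n k + (2⁻¹:ℝ) ^ n * ((2:ℝ) ^ n * T n k)) = T 0 := by
      funext k
      have h1 : (2⁻¹:ℝ) ^ n * ((2:ℝ) ^ n * T n k) = T n k := by
        rw [← mul_assoc, show (2⁻¹:ℝ) ^ n * (2:ℝ) ^ n = 1 from by rw [← mul_pow]; norm_num,
          one_mul]
      rw [h1]
      exact (hT0split n k).symm
    have hmem : F (T 0) y ∈ A n (Lam n) := by
      refine ⟨fun k => (2:ℝ) ^ n * T n k, hrhoW n, ?_⟩
      show val (fun k => Lam n k + (2⁻¹:ℝ) ^ n * ((2:ℝ) ^ n * T n k)) = F (T 0) y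
      rw [hfun]
      show min (⨅ z, F (T 0) z) (L + ε) = F (T 0) y
      rw [hIy]
      exact min_eq_left hIleLε
    have ha : F (T 0) y ≤ sSup (A n (Lam n)) :=
      le_csSup ⟨L + ε, fun a ha => hAbdd n (Lam n) a ha⟩ hmem
    have hb := hmuV n
    have hpsi0 : ∀ k, 0 ≤ Lam n k + (2⁻¹:ℝ) ^ n * mu n k :=
      fun k => add_nonneg (hLam_nonneg n k) (mul_nonneg (by positivity) (hmu0 n k))
    have hpsimass : HasSum (fun k => Lam n k + (2⁻¹:ℝ) ^ n * mu n k) 1 := by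
      have h := (hLamMass n).add ((hmu1 n).mul_left ((2⁻¹:ℝ) ^ n))
      rwa [show (1 - (2⁻¹:ℝ) ^ n) + (2⁻¹:ℝ) ^ n * 1 = 1 from by ring] at h
    have hc : val (fun k => Lam n k + (2⁻¹:ℝ) ^ n * mu n k) ≤
        F (fun k => Lam n k + (2⁻¹:ℝ) ^ n * mu n k) y :=
      le_trans (min_le_left _ _) (hiInf_le _ hpsi0 hpsimass y)
    linarith
  have hstep1 : ∀ n, F (T n) y < (2⁻¹:ℝ) ^ n * F (mu n) y + ε * (4⁻¹:ℝ) ^ n := by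
    intro n
    have h0 := hchain n
    have hsplit0 : F (T 0) y = F (Lam n) y + F (T n) y := by
      have h1 : F (T 0) y = ∑' k, (Lam n k + T n k) * f k y := by
        simp only [hFdef]
        exact tsum_congr fun k => by rw [hT0split n k]
      have h2 : (∑' k, (Lam n k + T n k) * f k y) =
          (∑' k, Lam n k * f k y) + ∑' k, T n k * f k y :=
        simons_add f (hLam_nonneg n) (hLamMass n).summable (hTnonneg n) (hTmass n).summable hB
      simp only [hFdef]
      simp only [hFdef] at h1 h2
      rw [h1, h2]
    have hpsieq : F (fun k => Lam n k + (2⁻¹:ℝ) ^ n * mu n k) y =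
        F (Lam n) y + (2⁻¹:ℝ) ^ n * F (mu n) y := by
      have h2 : (∑' k, (Lam n k + (2⁻¹:ℝ) ^ n * mu n k) * f k y) =
          (∑' k, Lam n k * f k y) + ∑' k, ((2⁻¹:ℝ) ^ n * mu n k) * f k y :=
        simons_add f (hLam_nonneg n) (hLamMass n).summable
          (fun k => mul_nonneg (by positivity) (hmu0 n k)) ((hmu1 n).summable.mul_left _) hB
      have h3 : (∑' k, ((2⁻¹:ℝ) ^ n * mu n k) * f k y) =
          (2⁻¹:ℝ) ^ n * ∑' k, mu n k * f k y := simons_smul f _ _ y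
      simp only [hFdef]
      rw [h2, h3]
    linarith
  have hsplitF : ∀ n, F (T n) y = (2⁻¹:ℝ) ^ (n+1) * F (mu n) y + F (T (n+1)) y := by
    intro n
    have h1 : (∑' k, T n k * f k y) =
        ∑' k, ((2⁻¹:ℝ) ^ (n+1) * mu n k + T (n+1) k) * f k y :=
      tsum_congr fun k => by rw [← hTsplit n k]
    have h2 : (∑' k, ((2⁻¹:ℝ) ^ (n+1) * mu n k + T (n+1) k) * f k y) =
        (∑' k, ((2⁻¹:ℝ) ^ (n+1) * mu n k) * f k y) + ∑' k, T (n+1) k * f k y :=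
      simons_add f (fun k => mul_nonneg (by positivity) (hmu0 n k))
        ((hmu1 n).summable.mul_left _) (hTnonneg (n+1)) (hTmass (n+1)).summable hB
    have h3 : (∑' k, ((2⁻¹:ℝ) ^ (n+1) * mu n k) * f k y) =
        (2⁻¹:ℝ) ^ (n+1) * ∑' k, mu n k * f k y := simons_smul f _ _ y
    simp only [hFdef]
    rw [h1, h2, h3]
  -- recursive estimates on u n = 2^n * F (T n) y
  have hurec : ∀ n, (2:ℝ) ^ (n+1) * F (T (n+1)) y <
      (2:ℝ) ^ n * F (T n) y + ε * (2⁻¹:ℝ) ^ n := by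
    intro n
    have e1 := hpow (n+1)
    have e2 : (2:ℝ) ^ (n+1) * (4⁻¹:ℝ) ^ n = 2 * (2⁻¹:ℝ) ^ n := by
      have h4 : ((4:ℝ)⁻¹) ^ n = (2⁻¹:ℝ) ^ n * (2⁻¹:ℝ) ^ n := by rw [← mul_pow]; norm_num
      rw [h4, pow_succ]
      calc (2:ℝ) ^ n * 2 * ((2⁻¹:ℝ) ^ n * (2⁻¹:ℝ) ^ n)
          = ((2:ℝ) ^ n * (2⁻¹:ℝ) ^ n) * (2 * (2⁻¹:ℝ) ^ n) := by ring
        _ = 2 * (2⁻¹:ℝ) ^ n := by rw [hpow n, one_mul]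
    have e3 : (2:ℝ) ^ n * (2⁻¹:ℝ) ^ (n+1) = 2⁻¹ := by
      rw [pow_succ, ← mul_assoc, hpow n, one_mul]
    have a := hstep1 n
    have b := hsplitF n
    have hq : (2⁻¹:ℝ) ^ (n+1) * F (mu n) y = 2⁻¹ * ((2⁻¹:ℝ) ^ n * F (mu n) y) := by
      rw [pow_succ]; ring
    have c : F (T (n+1)) y < (2⁻¹:ℝ) ^ (n+1) * F (mu n) y + ε * (4⁻¹:ℝ) ^ n := by
      linarith
    have c2 : (2:ℝ) ^ (n+1) * F (T (n+1)) y <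
        (2:ℝ) ^ (n+1) * ((2⁻¹:ℝ) ^ (n+1) * F (mu n) y + ε * (4⁻¹:ℝ) ^ n) :=
      mul_lt_mul_of_pos_left c (by positivity)
    have c3 : (2:ℝ) ^ (n+1) * ((2⁻¹:ℝ) ^ (n+1) * F (mu n) y + ε * (4⁻¹:ℝ) ^ n) =
        F (mu n) y + 2 * ε * (2⁻¹:ℝ) ^ n := by
      linear_combination F (mu n) y * e1 + ε * e2
    have b2 : (2:ℝ) ^ n * F (T n) y = 2⁻¹ * F (mu n) y + (2:ℝ) ^ n * F (T (n+1)) y := by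
      linear_combination (2:ℝ) ^ n * b + F (mu n) y * e3
    have e4 : (2:ℝ) ^ (n+1) * F (T (n+1)) y = 2 * ((2:ℝ) ^ n * F (T (n+1)) y) := by
      rw [pow_succ]; ring
    linarith
  have hGeq : ∀ n, F (mu n) y =
      2 * ((2:ℝ) ^ n * F (T n) y) - (2:ℝ) ^ (n+1) * F (T (n+1)) y := by
    intro n
    have e3 : (2:ℝ) ^ n * (2⁻¹:ℝ) ^ (n+1) = 2⁻¹ := by
      rw [pow_succ, ← mul_assoc, hpow n, one_mul]
    have b := hsplitF n
    have b2 : (2:ℝ) ^ n * F (T n) y = 2⁻¹ * F (mu n) y + (2:ℝ) ^ n * F (T (n+1)) y := by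
      linear_combination (2:ℝ) ^ n * b + F (mu n) y * e3
    have e4 : (2:ℝ) ^ (n+1) * F (T (n+1)) y = 2 * ((2:ℝ) ^ n * F (T (n+1)) y) := by
      rw [pow_succ]; ring
    linarith
  have hu_ub : ∀ n, (2:ℝ) ^ n * F (T n) y ≤
      F (T 0) y + 2 * ε - 2 * (ε * (2⁻¹:ℝ) ^ n) := by
    intro n
    induction n with
    | zero => norm_num
    | succ n ih =>
      have h1 := hurec n
      have hq : 2 * (ε * (2⁻¹:ℝ) ^ (n+1)) = ε * (2⁻¹:ℝ) ^ n := by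
        rw [pow_succ]; ring
      linarith
  have hu_lb : ∀ n, -B ≤ (2:ℝ) ^ n * F (T n) y := by
    intro n
    have habs : |F (T n) y| ≤ (∑' k, T n k) * B := by
      simp only [hFdef]
      exact simons_abs_le f (hTnonneg n) (hTmass n).summable hB
    rw [(hTmass n).tsum_eq] at habs
    have h1 : -((2⁻¹:ℝ) ^ n * B) ≤ F (T n) y := neg_le_of_abs_le habs
    have h2 := mul_le_mul_of_nonneg_left h1 (le_of_lt (pow_pos (by norm_num : (0:ℝ) < 2) n))
    have h3 : (2:ℝ) ^ n * -((2⁻¹:ℝ) ^ n * B) = -B := by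
      linear_combination (-B) * hpow n
    linarith
  have hinfmany : ∀ N, ∃ n, N ≤ n ∧ F (mu n) y ≤ F (T 0) y + 3 * ε := by
    intro N
    by_contra hcon
    push_neg at hcon
    have key : ∀ m, (2:ℝ) ^ m * ε ≤
        (F (T 0) y + 3 * ε) - (2:ℝ) ^ (N + m) * F (T (N + m)) y := by
      intro m
      induction m with
      | zero =>
        have h1 := hu_ub N
        have h2 : 0 ≤ ε * (2⁻¹:ℝ) ^ N := by positivity
        simp only [pow_zero, one_mul, Nat.add_zero]
        linarith
      | succ m ih =>
        have hG := hcon (N + m) (by omega)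
        have hg := hGeq (N + m)
        have hps2 : (2:ℝ) ^ (m+1) * ε = 2 * ((2:ℝ) ^ m * ε) := by rw [pow_succ]; ring
        show (2:ℝ) ^ (m+1) * ε ≤
          (F (T 0) y + 3 * ε) - (2:ℝ) ^ ((N + m) + 1) * F (T ((N + m) + 1)) y
        linarith
    obtain ⟨m, hm⟩ := pow_unbounded_of_one_lt (y := (2:ℝ))
      ((F (T 0) y + 3 * ε + B) / ε) one_lt_two
    rw [div_lt_iff₀ hε] at hm
    have h1 := key m
    have h2 := hu_lb (N + m)
    linarith
  have hfreqy : ∀ N : ℕ, ∀ δ : ℝ, 0 < δ → ∃ k, N ≤ k ∧ f k y < F (T 0) y + 3 * ε + δ := by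
    intro N δ hδ
    obtain ⟨n, hnN, hGn⟩ := hinfmany N
    by_contra hcon
    push_neg at hcon
    have hterm : ∀ k, mu n k * (F (T 0) y + 3 * ε + δ) ≤ mu n k * f k y := by
      intro k
      rcases eq_or_ne (mu n k) 0 with h0 | h0
      · rw [h0]; simp
      · have hk := (hmusupp n k h0).2
        exact mul_le_mul_of_nonneg_left (hcon k (by omega)) (hmu0 n k)
    have hle := Summable.tsum_le_tsum hterm ((hmu1 n).summable.mul_right _)
      (hsumm (mu n) (hmu0 n) (hmu1 n).summable y)
    rw [tsum_mul_right, (hmu1 n).tsum_eq, one_mul] at hle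
    have hGn' : (∑' k, mu n k * f k y) ≤ F (T 0) y + 3 * ε := by
      simp only [hFdef] at hGn
      exact hGn
    linarith
  have hbly : IsBoundedUnder (· ≥ ·) atTop (fun n => f n y) :=
    ⟨-B, Filter.eventually_map.2 (Filter.Eventually.of_forall fun n => (abs_le.1 (hB n)).1)⟩
  have hfin : liminf (fun n => f n y) atTop ≤ F (T 0) y + 3 * ε := by
    refine le_of_forall_pos_le_add fun δ hδ => ?_
    refine liminf_le_of_frequently_le ?_ hbly
    rw [frequently_atTop]
    intro N
    obtain ⟨k, hk1, hk2⟩ := hfreqy N δ hδ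
    exact ⟨k, hk1, le_of_lt hk2⟩
  exact ⟨y, hyY, by linarith⟩



/-- Inf-liminf theorem: if every countable convex combination of the pointwise bounded
sequence `f n` attains its infimum over `X` at a point of `Y`, then the infimum of
`liminf f n` over `X` equals its infimum over `Y` (in the extended reals). -/
theorem inf_liminf {X : Type*} [Nonempty X] (f : ℕ → X → ℝ)
    (hbdd : ∀ x : X, ∃ M : ℝ, ∀ n, |f n x| ≤ M) (Y : Set X)
    (hatt : ∀ g : X → ℝ, (∃ lam : ℕ → ℝ, (∀ n, 0 ≤ lam n) ∧ HasSum lam 1 ∧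
        ∀ x, HasSum (fun n => lam n * f n x) (g x)) →
      ∃ y ∈ Y, ∀ x : X, g y ≤ g x) :
    (⨅ x : X, ((liminf (fun n => f n x) atTop : ℝ) : EReal)) =
      ⨅ y : Y, ((liminf (fun n => f n (y : X)) atTop : ℝ) : EReal) := by
  apply le_antisymm
  · exact le_iInf fun y => iInf_le _ (y : X)
  · refine le_iInf fun x => ?_
    refine le_of_forall_gt_imp_ge_of_dense fun c hc => ?_
    induction c with
    | bot => exact absurd hc (not_lt_bot)
    | top => exact le_top
    | coe r =>
      have hLr : liminf (fun n => f n x) atTop < r := EReal.coe_lt_coe_iff.1 hc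
      set L := liminf (fun n => f n x) atTop with hL
      have hε : 0 < (r - L) / 4 := by linarith
      obtain ⟨y, hyY, hle⟩ := simons_key f hbdd Y hatt x ((r - L) / 4) hε
      have hle' : liminf (fun n => f n y) atTop ≤ r := by
        rw [← hL] at hle
        linarith
      calc (⨅ y : Y, ((liminf (fun n => f n (y : X)) atTop : ℝ) : EReal)) ≤
            ((liminf (fun n => f n ((⟨y, hyY⟩ : Y) : X)) atTop : ℝ) : EReal) :=
            iInf_le _ (⟨y, hyY⟩ : Y)
        _ ≤ (r : EReal) := EReal.coe_le_coe_iff.2 hle'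
end

section
/- Let E be a separable Banach space and A ⊆ E a norm-bounded set such that A (via the canonical embedding) has a weak* cluster point x₀** ∈ E** \ E. Let D ⊆ E be weakly compact convex with 0 not in the closed convex hull of A ∪ D. Then there exists a sequence (y_n*) in a multiple of B_{E*} such that: (i) y_n*(d) > β for all d ∈ D, n ∈ ℕ, for some β > 0; (ii) every y* ∈ co_σ{y_n* : n ≥ 1} satisfies y*(d) > 0 for all d ∈ D; (iii) liminf_n ⟨y_n*, x₀**⟩ ≤ α < β; and (iv) lim_n y_n*(x) exists and is > β for every x ∈ A, for some 0 < α < β. -/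
open NormedSpace Filter

open Set

noncomputable instance tripleDualNormedAddCommGroup {E : Type*} [NormedAddCommGroup E] [NormedSpace ℝ E] :
    NormedAddCommGroup (StrongDual ℝ (StrongDual ℝ (StrongDual ℝ E))) :=
  @ContinuousLinearMap.toNormedAddCommGroup ℝ ℝ (StrongDual ℝ (StrongDual ℝ E)) ℝ _ _ _ _ _ _ (RingHom.id ℝ) _




lemma goldstine_two {E : Type*} [NormedAddCommGroup E] [NormedSpace ℝ E]
    (x₀'' : StrongDual ℝ (StrongDual ℝ E))
    (F : StrongDual ℝ (StrongDual ℝ (StrongDual ℝ E)))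
    (hF0 : ∀ x : E, F (inclusionInDoubleDual ℝ E x) = 0)
    (hF1 : F x₀'' = 1) (C : ℝ) (hC : ‖F‖ ≤ C)
    (k : ℕ) (e : Fin k → E) (ε : ℝ) (hε : 0 < ε) :
    ∃ v : StrongDual ℝ E, ‖v‖ ≤ C ∧ (∀ i, |v (e i)| < ε) ∧ 1/2 ≤ x₀'' v := by
  have hCpos : 0 < C := by
    have h1 : (1:ℝ) ≤ ‖F‖ * ‖x₀''‖ := by
      calc (1:ℝ) = ‖F x₀''‖ := by rw [hF1]; norm_num
        _ ≤ ‖F‖ * ‖x₀''‖ := @ContinuousLinearMap.le_opNorm ℝ ℝ (StrongDual ℝ (StrongDual ℝ E)) ℝ _ _ _ _ _ _ (RingHom.id ℝ) _ F x₀''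
    nlinarith [norm_nonneg x₀'', norm_nonneg F]
  -- linear map into (Fin k → ℝ) × ℝ
  let Ψ : StrongDual ℝ E →ₗ[ℝ] (Fin k → ℝ) × ℝ :=
    { toFun := fun v => (fun i => v (e i), x₀'' v)
      map_add' := by intro a b; ext i <;> simp
      map_smul' := by intro c a; ext i <;> simp }
  set S : Set ((Fin k → ℝ) × ℝ) := closure (Ψ '' Metric.closedBall 0 C) with hS
  have hSconv : Convex ℝ S := ((convex_closedBall (0 : StrongDual ℝ E) C).linear_image Ψ).closure
  have hmem : ((0 : Fin k → ℝ), (1 : ℝ)) ∈ S := by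
    by_contra hnot
    obtain ⟨f, u, hfS, hfx⟩ := geometric_hahn_banach_closed_point hSconv isClosed_closure hnot
    -- decompose f
    set lam : Fin k → ℝ := fun i => f ((fun j => if i = j then (1:ℝ) else 0), 0) with hlam
    set μ : ℝ := f (0, 1) with hμ
    have hlt : u < μ := hfx
    have hdecomp : ∀ (y : Fin k → ℝ) (t : ℝ), f (y, t) = (∑ i, y i * lam i) + t * μ := by
      intro y t
      have h1 : (y, t) = (y, (0:ℝ)) + t • ((0 : Fin k → ℝ), (1:ℝ)) := by
        ext <;> simp
      rw [h1, map_add, map_smul]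
      have h2 : f (y, (0:ℝ)) = ∑ i, y i * lam i := by
        have h3 := LinearMap.pi_apply_eq_sum_univ
          ((f.toLinearMap).comp (LinearMap.inl ℝ (Fin k → ℝ) ℝ)) y
        simp only [LinearMap.comp_apply, LinearMap.inl_apply, ContinuousLinearMap.coe_coe,
          smul_eq_mul] at h3
        exact h3
      rw [h2]; simp [smul_eq_mul, hμ]
    -- the element G of the bidual
    set G : StrongDual ℝ (StrongDual ℝ E) :=
      (∑ i, lam i • inclusionInDoubleDual ℝ E (e i)) + μ • x₀'' with hG
    have hGv : ∀ v : StrongDual ℝ E, G v = f (Ψ v) := by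
      intro v
      have : G v = (∑ i, lam i * v (e i)) + μ * (x₀'' v) := by
        simp [hG, ContinuousLinearMap.sum_apply, inclusionInDoubleDual, smul_eq_mul]
      rw [this, show Ψ v = (fun i => v (e i), x₀'' v) from rfl, hdecomp]
      congr 1
      · exact Finset.sum_congr rfl fun i _ => by ring
      · ring
    have hupos : 0 < u := by
      have := hfS _ (subset_closure ⟨0, Metric.mem_closedBall_self hCpos.le, rfl⟩)
      simpa using this
    have habs : ∀ v : StrongDual ℝ E, ‖v‖ ≤ C → |G v| ≤ u := by
      intro v hv
      have h1 : G v < u := by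
        rw [hGv]
        exact hfS _ (subset_closure ⟨v, by simpa [Metric.mem_closedBall] using hv, rfl⟩)
      have h2 : G (-v) < u := by
        rw [hGv]
        refine hfS _ (subset_closure ⟨-v, ?_, rfl⟩)
        simpa [Metric.mem_closedBall] using hv
      have h2' : -(G v) < u := by rwa [map_neg] at h2
      rw [abs_le]
      constructor <;> linarith
    have hGnorm : ‖G‖ ≤ u / C := by
      refine ContinuousLinearMap.opNorm_le_bound G (by positivity) (fun v => ?_)
      rcases eq_or_ne v 0 with rfl | hv0
      · simp
      · have hnv : 0 < ‖v‖ := norm_pos_iff.mpr hv0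
        have := habs ((C / ‖v‖) • v) (by
          rw [norm_smul, Real.norm_eq_abs, abs_of_pos (by positivity)]
          rw [div_mul_cancel₀]; exact hnv.ne')
        rw [map_smul, smul_eq_mul, abs_mul, abs_of_pos (by positivity : (0:ℝ) < C / ‖v‖)] at this
        rw [show u / C * ‖v‖ = u * ‖v‖ / C by ring, le_div_iff₀ hCpos]
        calc ‖G v‖ * C = C / ‖v‖ * |G v| * ‖v‖ := by
              rw [Real.norm_eq_abs]; field_simp
          _ ≤ u * ‖v‖ := mul_le_mul_of_nonneg_right this hnv.le
    have hFG : F G = μ := by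
      simp [hG, map_add, map_sum, map_smul, hF0, hF1, smul_eq_mul]
    have : μ ≤ u := by
      calc μ = F G := hFG.symm
        _ ≤ ‖F‖ * ‖G‖ := (le_abs_self _).trans (@ContinuousLinearMap.le_opNorm ℝ ℝ (StrongDual ℝ (StrongDual ℝ E)) ℝ _ _ _ _ _ _ (RingHom.id ℝ) _ F G)
        _ ≤ C * (u / C) := by
            apply mul_le_mul hC hGnorm (norm_nonneg G) hCpos.le
        _ = u := by field_simp
    linarith
  -- extract approximation
  rw [Metric.mem_closure_iff] at hmem
  obtain ⟨b, ⟨v, hvball, rfl⟩, hdist⟩ := hmem (min ε (1/2)) (by positivity)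
  refine ⟨v, by simpa [Metric.mem_closedBall] using hvball, ?_, ?_⟩
  · intro i
    have h1 : dist ((0 : Fin k → ℝ), (1:ℝ)).1 (Ψ v).1 ≤ dist ((0 : Fin k → ℝ), (1:ℝ)) (Ψ v) :=
      le_max_left _ _
    have h2 : dist (((0 : Fin k → ℝ)) i) ((Ψ v).1 i) ≤ dist ((0 : Fin k → ℝ), (1:ℝ)).1 (Ψ v).1 :=
      dist_le_pi_dist _ _ i
    have : dist (0:ℝ) (v (e i)) < ε := lt_of_le_of_lt (h2.trans h1) (hdist.trans_le (min_le_left _ _))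
    simpa [dist_eq_norm, abs_sub_comm] using this
  · have h1 : dist ((0 : Fin k → ℝ), (1:ℝ)).2 (Ψ v).2 ≤ dist ((0 : Fin k → ℝ), (1:ℝ)) (Ψ v) :=
      le_max_right _ _
    have : dist (1:ℝ) (x₀'' v) < 1/2 := lt_of_le_of_lt h1 (hdist.trans_le (min_le_right _ _))
    rw [Real.dist_eq] at this
    cases' abs_lt.mp this with h _
    linarith




-- evaluation of a functional is continuous on the weak space
lemma weak_eval_continuous {E : Type*} [NormedAddCommGroup E] [NormedSpace ℝ E]
    (u : StrongDual ℝ E) :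
    Continuous fun p : WeakSpace ℝ E => u ((toWeakSpace ℝ E).symm p) :=
  WeakBilin.eval_continuous (topDualPairing ℝ E).flip u

lemma exists_convexCombo_small {E : Type*} [NormedAddCommGroup E] [NormedSpace ℝ E]
    (D : Set E) (hDconv : Convex ℝ D) (hDcpt : IsCompact (toWeakSpace ℝ E '' D))
    (v : ℕ → StrongDual ℝ E) (hv : ∀ d ∈ D, Tendsto (fun n => v n d) atTop (nhds 0))
    (ε : ℝ) (hε : 0 < ε) (N : ℕ) :
    ∃ u ∈ convexHull ℝ {w : StrongDual ℝ E | ∃ n, N ≤ n ∧ w = v n}, ∀ d ∈ D, u d < ε := by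
  rcases D.eq_empty_or_nonempty with rfl | ⟨d₀, hd₀⟩
  · exact ⟨v N, subset_convexHull ℝ _ ⟨N, le_refl N, rfl⟩, by simp⟩
  set co := convexHull ℝ {w : StrongDual ℝ E | ∃ n, N ≤ n ∧ w = v n} with hco
  by_contra hcon
  push_neg at hcon
  have h2 : ∀ u ∈ co, ∃ d ∈ D, ε ≤ u d := by
    intro u hu
    obtain ⟨d, hd, hle⟩ := hcon u hu
    exact ⟨d, hd, hle⟩
  -- the closed sets
  set Z : co → Set (WeakSpace ℝ E) :=
    fun u => {p | ε ≤ (u : StrongDual ℝ E) ((toWeakSpace ℝ E).symm p)} with hZ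
  have hZclosed : ∀ u : co, IsClosed (Z u) :=
    fun u => isClosed_le continuous_const (weak_eval_continuous _)
  rcases eq_empty_or_nonempty ((toWeakSpace ℝ E '' D) ∩ ⋂ u : co, Z u) with hemp | ⟨p, hp⟩
  · -- finite subfamily with empty intersection: separate
    obtain ⟨t, ht⟩ := hDcpt.elim_finite_subfamily_closed Z hZclosed hemp
    have htne : t.Nonempty := by
      rcases t.eq_empty_or_nonempty with rfl | h
      · exfalso
        have hmem : (toWeakSpace ℝ E d₀) ∈ (∅ : Set (WeakSpace ℝ E)) := by
          rw [← ht]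
          exact ⟨Set.mem_image_of_mem _ hd₀, by simp⟩
        exact hmem
      · exact h
    -- in the finite product space
    classical
    set ι := {u : co // u ∈ t}
    haveI : Fintype ι := by infer_instance
    set Φ : E →ₗ[ℝ] (ι → ℝ) :=
      { toFun := fun x => fun u => ((u : co) : StrongDual ℝ E) x
        map_add' := by intro a b; funext u; simp
        map_smul' := by intro c a; funext u; simp } with hΦ
    have hS1conv : Convex ℝ (Φ '' D) := hDconv.linear_image Φ
    have hS1cpt : IsCompact (Φ '' D) := by
      have : Φ '' D = (fun p : WeakSpace ℝ E =>
          (fun u : ι => ((u : co) : StrongDual ℝ E) ((toWeakSpace ℝ E).symm p))) '' (toWeakSpace ℝ E '' D) := by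
        rw [Set.image_image]
        rfl
      rw [this]
      exact hDcpt.image (continuous_pi fun u => weak_eval_continuous _)
    set Q : Set (ι → ℝ) := {y | ∀ u : ι, ε ≤ y u} with hQ
    have hQconv : Convex ℝ Q := by
      intro a ha b hb s r hs hr hsr
      intro u
      have := ha u; have := hb u
      calc ε = s * ε + r * ε := by rw [← add_mul, hsr, one_mul]
        _ ≤ s * a u + r * b u := by
            apply add_le_add <;> apply mul_le_mul_of_nonneg_left <;> assumption
        _ = (s • a + r • b) u := by simp [smul_eq_mul]
    have hQclosed : IsClosed Q := by
      have : Q = ⋂ u : ι, {y : ι → ℝ | ε ≤ y u} := by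
        ext y; simp [hQ]
      rw [this]
      exact isClosed_iInter fun u => isClosed_le continuous_const (continuous_apply u)
    have hdisj : Disjoint (Φ '' D) Q := by
      rw [Set.disjoint_left]
      rintro y ⟨d, hd, rfl⟩ hyQ
      -- d ∈ D with all u d ≥ ε: contradicts ht
      have : (toWeakSpace ℝ E d) ∈ (toWeakSpace ℝ E '' D) ∩ ⋂ u ∈ t, Z u := by
        refine ⟨Set.mem_image_of_mem _ hd, ?_⟩
        simp only [Set.mem_iInter]
        intro u hu
        have := hyQ ⟨u, hu⟩
        have h' : ε ≤ ((u : co) : StrongDual ℝ E) d := this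
        simpa [hZ] using h'
      rw [ht] at this
      exact this
    obtain ⟨f, u0, v0, hfD, huv, hfQ⟩ :=
      geometric_hahn_banach_compact_closed hS1conv hS1cpt hQconv hQclosed hdisj
    -- coefficients
    set lam : ι → ℝ := fun u => f (fun j => if u = j then (1:ℝ) else 0) with hlamdef
    have hfdecomp : ∀ y : ι → ℝ, f y = ∑ u, y u * lam u := by
      intro y
      have h3 := LinearMap.pi_apply_eq_sum_univ (f.toLinearMap) y
      simp only [ContinuousLinearMap.coe_coe, smul_eq_mul] at h3
      exact h3
    -- lam nonneg
    have hlam_nonneg : ∀ u : ι, 0 ≤ lam u := by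
      intro u₀
      by_contra hneg
      push_neg at hneg
      set sl : ℝ := ∑ u, lam u with hsl
      have hconst : ∀ r : ℝ, 0 ≤ r →
          v0 < ε * sl + r * lam u₀ := by
        intro r hr
        have hmem : (fun u : ι => ε + (if u₀ = u then r else 0)) ∈ Q := by
          intro u
          by_cases h : u₀ = u <;> simp [h, hr]
        have := hfQ _ hmem
        rw [hfdecomp] at this
        calc v0 < ∑ u, (ε + if u₀ = u then r else 0) * lam u := this
          _ = ε * sl + r * lam u₀ := by
              have e1 : ∀ u : ι, (ε + if u₀ = u then r else 0) * lam u
                  = ε * lam u + (if u₀ = u then r * lam u else 0) := fun u => by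
                split_ifs <;> ring
              rw [Finset.sum_congr rfl (fun u _ => e1 u), Finset.sum_add_distrib,
                ← Finset.mul_sum, Finset.sum_ite_eq]
              simp [hsl]
      have hA := hconst 0 le_rfl
      have hB := hconst ((v0 - ε * sl) / lam u₀) (by
        exact div_nonneg_of_nonpos (by nlinarith) hneg.le)
      rw [div_mul_cancel₀] at hB
      · linarith
      · exact hneg.ne
    set sl : ℝ := ∑ u, lam u with hsl
    have hes : v0 < ε * sl := by
      have hmem : (fun _ : ι => ε) ∈ Q := fun u => le_refl _
      have := hfQ _ hmem
      rw [hfdecomp] at this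
      calc v0 < ∑ u, ε * lam u := this
        _ = ε * sl := by rw [hsl, Finset.mul_sum]
    have hslnonneg : 0 ≤ sl := Finset.sum_nonneg fun u _ => hlam_nonneg u
    have hslpos : 0 < sl := by
      rcases hslnonneg.lt_or_eq with h | h
      · exact h
      · exfalso
        -- all lam = 0 so f ≡ 0
        have hall : ∀ u : ι, lam u = 0 := by
          intro u
          have := Finset.sum_eq_zero_iff_of_nonneg (fun u _ => hlam_nonneg u) |>.mp h.symm
          exact this u (Finset.mem_univ u)
        have hf0 : ∀ y, f y = 0 := by
          intro y; rw [hfdecomp]; simp [hall]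
        have h1 := hfD _ (Set.mem_image_of_mem _ hd₀)
        rw [hf0] at h1
        have h2' := hes
        rw [← h, mul_zero] at h2'
        linarith
    -- the convex combination
    set u' : StrongDual ℝ E := sl⁻¹ • ∑ u : ι, lam u • ((u : co) : StrongDual ℝ E) with hu'
    have hu'mem : u' ∈ co := by
      have : u' = ∑ u : ι, (sl⁻¹ * lam u) • ((u : co) : StrongDual ℝ E) := by
        rw [hu', Finset.smul_sum]
        exact Finset.sum_congr rfl fun u _ => by rw [smul_smul]
      rw [this]
      refine (convex_convexHull ℝ _).sum_mem
        (fun u _ => mul_nonneg (inv_nonneg.mpr hslpos.le) (hlam_nonneg u)) ?_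
        (fun u _ => (u : co).2)
      rw [← Finset.mul_sum, ← hsl, inv_mul_cancel₀ hslpos.ne']
    obtain ⟨d, hd, hεd⟩ := h2 u' hu'mem
    have : u' d < ε := by
      have h1 : f (Φ d) < u0 := hfD _ (Set.mem_image_of_mem _ hd)
      have h2' : f (Φ d) = ∑ u : ι, ((u : co) : StrongDual ℝ E) d * lam u := by
        rw [hfdecomp]; rfl
      have h3 : u' d = sl⁻¹ * ∑ u : ι, ((u : co) : StrongDual ℝ E) d * lam u := by
        rw [hu']
        simp only [ContinuousLinearMap.smul_apply, ContinuousLinearMap.sum_apply,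
          smul_eq_mul]
        congr 1
        exact Finset.sum_congr rfl fun u _ => by ring
      rw [h3, ← h2']
      calc sl⁻¹ * f (Φ d) < sl⁻¹ * u0 := by
            apply mul_lt_mul_of_pos_left h1 (by positivity)
        _ ≤ sl⁻¹ * v0 := by
            apply mul_le_mul_of_nonneg_left huv.le (by positivity)
        _ < ε := by
            rw [inv_mul_lt_iff₀ hslpos, mul_comm]
            exact hes
    linarith
  · -- nonempty intersection: contradiction with pointwise convergence
    obtain ⟨⟨d, hdD, hdp⟩, hpZ⟩ := hp
    rw [Set.mem_iInter] at hpZ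
    have hlim := hv d hdD
    have hεd : ∀ n, N ≤ n → ε ≤ v n d := by
      intro n hn
      have hmem : v n ∈ co := subset_convexHull ℝ _ ⟨n, hn, rfl⟩
      have := hpZ ⟨v n, hmem⟩
      simp only [hZ, Set.mem_setOf_eq] at this
      rw [← hdp] at this
      simpa using this
    have : ε ≤ 0 := by
      have h1 : Tendsto (fun n => v (n + N) d) atTop (nhds 0) :=
        hlim.comp (tendsto_add_atTop_nat N)
      have h2' : ∀ n, ε ≤ v (n + N) d := fun n => hεd (n + N) (Nat.le_add_left N n)
      exact le_of_tendsto_of_tendsto tendsto_const_nhds h1 (Eventually.of_forall h2')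
    linarith




lemma exists_killing_functional {E : Type*} [NormedAddCommGroup E] [NormedSpace ℝ E]
    [CompleteSpace E] (x₀'' : StrongDual ℝ (StrongDual ℝ E))
    (hx₀ : x₀'' ∉ Set.range (inclusionInDoubleDual ℝ E)) :
    ∃ F : StrongDual ℝ (StrongDual ℝ (StrongDual ℝ E)),
      (∀ x : E, F (inclusionInDoubleDual ℝ E x) = 0) ∧ F x₀'' = 1 := by
  have hiso : Isometry (inclusionInDoubleDual ℝ E) := (inclusionInDoubleDualLi ℝ (E := E)).isometry
  have hclosed : IsClosed (Set.range (inclusionInDoubleDual ℝ E)) :=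
    hiso.isClosedEmbedding.isClosed_range
  have hconv : Convex ℝ (Set.range (inclusionInDoubleDual ℝ E)) := by
    rw [← Set.image_univ]
    exact convex_univ.linear_image (inclusionInDoubleDual ℝ E).toLinearMap
  obtain ⟨f, u, hfr, hfx⟩ := geometric_hahn_banach_closed_point hconv hclosed hx₀
  have hzero : ∀ x : E, f (inclusionInDoubleDual ℝ E x) = 0 := by
    intro x
    by_contra hne
    have hval : ∀ t : ℝ, t * f (inclusionInDoubleDual ℝ E x) < u := by
      intro t
      have := hfr _ ⟨t • x, rfl⟩
      rwa [map_smul, map_smul, smul_eq_mul] at this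
    rcases lt_or_gt_of_ne hne with h | h
    · have := hval ((u + 1) / f (inclusionInDoubleDual ℝ E x))
      rw [div_mul_cancel₀ _ hne] at this
      linarith
    · have := hval ((u + 1) / f (inclusionInDoubleDual ℝ E x))
      rw [div_mul_cancel₀ _ hne] at this
      linarith
  have hupos : 0 < u := by
    have := hfr _ ⟨0, rfl⟩
    rwa [map_zero, map_zero] at this
  have hfxpos : 0 < f x₀'' := lt_trans hupos hfx
  refine ⟨(f x₀'')⁻¹ • f, ?_, ?_⟩
  · intro x
    simp [hzero x]
  · simp [smul_eq_mul, inv_mul_cancel₀ hfxpos.ne']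




section Aux

lemma convex_abs_eval {E : Type*} [NormedAddCommGroup E] [NormedSpace ℝ E]
    (x : E) (δ : ℝ) : Convex ℝ {w : StrongDual ℝ E | |w x| ≤ δ} := by
  have : {w : StrongDual ℝ E | |w x| ≤ δ} = {w : StrongDual ℝ E | w x ≤ δ} ∩ {w : StrongDual ℝ E | -δ ≤ w x} := by
    ext w; simp [abs_le, and_comm]
  rw [this]
  have hlin : IsLinearMap ℝ (fun w : StrongDual ℝ E => w x) :=
    ⟨fun a b => rfl, fun c a => rfl⟩
  exact (convex_halfSpace_le hlin δ).inter (convex_halfSpace_ge hlin (-δ))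

end Aux

set_option maxHeartbeats 1000000 in
/-- Combination of the separation lemma with convex-combination approximation uniform
on `D`: there is a sequence `(y_n*)` in a multiple of `B_{E*}` strictly greater than
`β` on `D`, with every member of its `σ`-convex hull strictly positive on `D`,
`liminf ⟨y_n*, x₀**⟩ ≤ α < β`, and `lim_n y_n*(x)` existing and exceeding `β` on `A`. -/
theorem separation_with_directions {E : Type*} [NormedAddCommGroup E] [NormedSpace ℝ E]
    [CompleteSpace E] [TopologicalSpace.SeparableSpace E]
    (A : Set E) (hAbdd : Bornology.IsBounded A)
    (x₀'' : StrongDual ℝ (StrongDual ℝ E))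
    (hcluster : ClusterPt (StrongDual.toWeakDual x₀'')
      (Filter.principal ((fun a => StrongDual.toWeakDual (inclusionInDoubleDual ℝ E a)) '' A)))
    (hx₀ : x₀'' ∉ Set.range (inclusionInDoubleDual ℝ E))
    (D : Set E) (hDconv : Convex ℝ D) (hDcpt : IsCompact (toWeakSpace ℝ E '' D))
    (h0 : (0 : E) ∉ closure (convexHull ℝ (A ∪ D))) :
    ∃ (y : ℕ → StrongDual ℝ E) (R α β : ℝ),
      0 < α ∧ α < β ∧
      (∀ n, ‖y n‖ ≤ R) ∧
      (∀ n, ∀ d ∈ D, β < y n d) ∧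
      (∀ g : StrongDual ℝ E, (∃ lam : ℕ → ℝ, (∀ n, 0 ≤ lam n) ∧ HasSum lam 1 ∧
          HasSum (fun n => lam n • y n) g) → ∀ d ∈ D, 0 < g d) ∧
      liminf (fun n => x₀'' (y n)) atTop ≤ α ∧
      (∀ x ∈ A, ∃ L : ℝ, Tendsto (fun n => y n x) atTop (nhds L) ∧ β < L) := by
  classical
  -- Step 1: separation of 0 from closure (convexHull (A ∪ D))
  obtain ⟨f, uu, hfS, hfx⟩ := geometric_hahn_banach_closed_point
    ((convex_convexHull ℝ (A ∪ D)).closure) isClosed_closure h0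
  have hu0 : uu < 0 := by simpa using hfx
  set x₀' : StrongDual ℝ E := -f with hx₀'def
  set β₀ : ℝ := -uu with hβ₀def
  have hβ₀pos : 0 < β₀ := by simp only [hβ₀def]; linarith
  have hsep : ∀ z ∈ closure (convexHull ℝ (A ∪ D)), β₀ < x₀' z := by
    intro z hz
    have := hfS z hz
    simp only [hx₀'def, hβ₀def, ContinuousLinearMap.neg_apply]
    linarith
  have hsepA : ∀ x ∈ A, β₀ < x₀' x := fun x hx =>
    hsep _ (subset_closure (subset_convexHull ℝ _ (Or.inl hx)))
  have hsepD : ∀ d ∈ D, β₀ < x₀' d := fun d hd =>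
    hsep _ (subset_closure (subset_convexHull ℝ _ (Or.inr hd)))
  -- Step 2: β₀ ≤ x₀'' x₀'
  have hx2 : β₀ ≤ x₀'' x₀' := by
    have hcont : ContinuousAt (fun ψ : WeakDual ℝ (StrongDual ℝ E) => ψ x₀') (StrongDual.toWeakDual x₀'') :=
      (WeakDual.eval_continuous x₀').continuousAt
    have hcl2 := hcluster.map hcont tendsto_map
    rw [Filter.map_principal] at hcl2
    have hmem := mem_closure_iff_clusterPt.mpr hcl2
    have hsub : ((fun ψ : WeakDual ℝ (StrongDual ℝ E) => ψ x₀') ''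
        ((fun a => StrongDual.toWeakDual (inclusionInDoubleDual ℝ E a)) '' A)) ⊆ Set.Ici β₀ := by
      rintro r ⟨ψ, ⟨a, ha, rfl⟩, rfl⟩
      exact (hsepA a ha).le
    have := closure_minimal hsub isClosed_Ici hmem
    exact this
  -- Step 3: the killing functional
  obtain ⟨F, hF0, hF1⟩ := exists_killing_functional x₀'' hx₀
  set C : ℝ := max ‖F‖ 1 with hCdef
  have hC : ‖F‖ ≤ C := le_max_left _ _
  have hC1 : (1:ℝ) ≤ C := le_max_right _ _
  have hCpos : (0:ℝ) < C := lt_of_lt_of_le one_pos hC1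
  -- Step 4: dense sequence
  have : Nonempty E := ⟨0⟩
  obtain ⟨e, he⟩ := TopologicalSpace.exists_dense_seq E
  -- Step 5: the sequence v
  have hex : ∀ n : ℕ, ∃ w : StrongDual ℝ E, ‖w‖ ≤ C ∧
      (∀ i : Fin n, |w (e i)| < 1/(n+1)) ∧ 1/2 ≤ x₀'' w := fun n =>
    goldstine_two x₀'' F hF0 hF1 C hC n (fun i => e i) (1/(n+1)) (by positivity)
  choose v hvnorm hvsmall hvhalf using hex
  -- Step 6: pointwise convergence to 0
  have hv0 : ∀ x : E, Tendsto (fun n => v n x) atTop (nhds 0) := by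
    intro x
    rw [Metric.tendsto_atTop]
    intro δ hδ
    obtain ⟨i, hi⟩ := he.exists_dist_lt x (show (0:ℝ) < δ/(4*C) by positivity)
    obtain ⟨N2, hN2⟩ := exists_nat_gt (4/δ)
    refine ⟨max (i+1) N2, fun n hn => ?_⟩
    have hin : i < n := lt_of_lt_of_le (Nat.lt_succ_self i) (le_trans (le_max_left _ _) hn)
    have hN2n : N2 ≤ n := le_trans (le_max_right _ _) hn
    have h1 : |v n (e i)| < 1/(n+1) := hvsmall n ⟨i, hin⟩
    have h2 : (1:ℝ)/(n+1) ≤ 1/(N2+1) := by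
      apply div_le_div_of_nonneg_left one_pos.le (by positivity)
      exact_mod_cast Nat.succ_le_succ hN2n
    have h3 : (1:ℝ)/(N2+1) < δ/4 := by
      have hlt : 4/δ < (N2:ℝ) + 1 := lt_trans hN2 (by linarith)
      have h4' : (4:ℝ) < ((N2:ℝ)+1)*δ := by
        rw [div_lt_iff₀ hδ] at hlt
        linarith
      rw [div_lt_div_iff₀ (by positivity) (by norm_num : (0:ℝ) < 4)]
      nlinarith
    have h4 : |v n (x - e i)| ≤ C * ‖x - e i‖ := by
      calc |v n (x - e i)| = ‖v n (x - e i)‖ := rfl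
        _ ≤ ‖v n‖ * ‖x - e i‖ := (v n).le_opNorm _
        _ ≤ C * ‖x - e i‖ := by
            apply mul_le_mul_of_nonneg_right (hvnorm n) (norm_nonneg _)
    have h5 : ‖x - e i‖ < δ/(4*C) := by rwa [← dist_eq_norm]
    have h6 : |v n x| ≤ |v n (x - e i)| + |v n (e i)| := by
      have : v n x = v n (x - e i) + v n (e i) := by rw [← map_add]; congr 1; abel
      rw [this]; exact abs_add_le _ _
    rw [Real.dist_eq, sub_zero]
    have h7 : C * ‖x - e i‖ < C * (δ/(4*C)) := by
      exact mul_lt_mul_of_pos_left h5 hCpos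
    have h8 : C * (δ/(4*C)) = δ/4 := by field_simp
    calc |v n x| ≤ |v n (x - e i)| + |v n (e i)| := h6
      _ < C * ‖x - e i‖ + 1/(n+1) := by
          apply add_lt_add_of_le_of_lt h4 h1
      _ < δ/4 + δ/4 := by
          apply add_lt_add (h8 ▸ h7) (lt_of_le_of_lt h2 h3)
      _ < δ := by linarith
  -- Step 7: constants
  set α : ℝ := β₀/4 with hαdef
  set β : ℝ := β₀/2 with hβdef
  set M : ℝ := 2*(x₀'' x₀' - α) with hMdef
  have hMpos : 0 < M := by
    have : α < β₀ := by rw [hαdef]; linarith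
    rw [hMdef]; linarith
  set ε : ℝ := β₀/(2*M) with hεdef
  have hεpos : 0 < ε := by rw [hεdef]; positivity
  have hMε : M * ε = β₀/2 := by rw [hεdef]; field_simp
  -- Step 8: the convex combinations
  have hexu : ∀ k : ℕ, ∃ w ∈ convexHull ℝ {w : StrongDual ℝ E | ∃ n, k ≤ n ∧ w = v n},
      ∀ d ∈ D, w d < ε :=
    fun k => exists_convexCombo_small D hDconv hDcpt v (fun d _ => hv0 d) ε hεpos k
  choose u humem husmall using hexu
  -- convex hull facts
  have hhull : ∀ (k : ℕ) (T : Set (StrongDual ℝ E)), Convex ℝ T → (∀ n, k ≤ n → v n ∈ T) →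
      u k ∈ T := by
    intro k T hTconv hTmem
    refine convexHull_min ?_ hTconv (humem k)
    rintro w ⟨n, hn, rfl⟩
    exact hTmem n hn
  have hunorm : ∀ k, ‖u k‖ ≤ C := by
    intro k
    have := hhull k (Metric.closedBall 0 C) (convex_closedBall 0 C)
      (fun n _ => mem_closedBall_zero_iff.mpr (hvnorm n))
    exact mem_closedBall_zero_iff.mp this
  have huhalf : ∀ k, 1/2 ≤ x₀'' (u k) := by
    intro k
    have hlin : IsLinearMap ℝ (fun w : StrongDual ℝ E => x₀'' w) := ⟨map_add x₀'', map_smul x₀''⟩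
    exact hhull k {w : StrongDual ℝ E | 1/2 ≤ x₀'' w} (convex_halfSpace_ge hlin (1/2))
      (fun n _ => hvhalf n)
  have hu0 : ∀ x : E, Tendsto (fun k => u k x) atTop (nhds 0) := by
    intro x
    rw [Metric.tendsto_atTop]
    intro δ hδ
    have := (Metric.tendsto_atTop.mp (hv0 x)) (δ/2) (by linarith)
    obtain ⟨K, hK⟩ := this
    refine ⟨K, fun k hk => ?_⟩
    have : u k ∈ {w : StrongDual ℝ E | |w x| ≤ δ/2} := by
      refine hhull k _ (convex_abs_eval x (δ/2)) (fun n hn => ?_)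
      have := hK n (le_trans hk hn)
      rw [Real.dist_eq, sub_zero] at this
      exact this.le
    rw [Real.dist_eq, sub_zero]
    exact lt_of_le_of_lt this (by linarith)
  -- Step 9: the sequence y
  set y : ℕ → StrongDual ℝ E := fun k => x₀' + (-M) • u k with hydef
  set R : ℝ := ‖x₀'‖ + M * C with hRdef
  have hyval : ∀ k (z : E), y k z = x₀' z - M * u k z := by
    intro k z
    simp [hydef, neg_mul, sub_eq_add_neg]
  have hynorm : ∀ k, ‖y k‖ ≤ R := by
    intro k
    calc ‖y k‖ ≤ ‖x₀'‖ + ‖(-M) • u k‖ := norm_add_le _ _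
      _ = ‖x₀'‖ + M * ‖u k‖ := by
          rw [norm_smul, Real.norm_eq_abs, abs_neg, abs_of_pos hMpos]
      _ ≤ R := by
          rw [hRdef]
          have := mul_le_mul_of_nonneg_left (hunorm k) hMpos.le
          linarith
  have hyD : ∀ k, ∀ d ∈ D, β < y k d := by
    intro k d hd
    rw [hyval]
    have h1 : u k d < ε := husmall k d hd
    have h2 : M * u k d < M * ε := mul_lt_mul_of_pos_left h1 hMpos
    rw [hMε] at h2
    have h3 := hsepD d hd
    rw [hβdef]
    linarith
  refine ⟨y, R, α, β, by rw [hαdef]; positivity, by rw [hαdef, hβdef]; linarith, hynorm, hyD,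
    ?_, ?_, ?_⟩
  · -- sigma-convex combinations positive on D
    rintro g ⟨lam, hlamnn, hlam1, hlamsum⟩ d hd
    have heval : HasSum (fun n => lam n * y n d) (g d) := by
      have := hlamsum.mapL (ContinuousLinearMap.apply ℝ ℝ d)
      simpa [smul_eq_mul] using this
    have hconst : HasSum (fun n => lam n * x₀' d) (x₀' d) := by
      simpa using hlam1.mul_right (x₀' d)
    have hdiff : HasSum (fun n => lam n * y n d - lam n * x₀' d) (g d - x₀' d) :=
      heval.sub hconst
    have hlb : HasSum (fun n => lam n * (-(β₀/2))) (-(β₀/2)) := by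
      simpa using hlam1.mul_right (-(β₀/2))
    have hle : g d - x₀' d ≥ -(β₀/2) := by
      refine hasSum_le (fun n => ?_) hlb hdiff
      have h1 : u n d < ε := husmall n d hd
      have h2 : lam n * y n d - lam n * x₀' d = lam n * (-(M * u n d)) := by
        rw [hyval]; ring
      rw [h2]
      apply mul_le_mul_of_nonneg_left _ (hlamnn n)
      have := mul_lt_mul_of_pos_left h1 hMpos
      rw [hMε] at this
      linarith
    have h3 := hsepD d hd
    have : β₀ - β₀/2 < g d := by linarith
    linarith [hβ₀pos, this]
  · -- liminf bound
    have hbound : ∀ n, -(‖x₀''‖ * R) ≤ x₀'' (y n) := by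
      intro n
      have h1 : |x₀'' (y n)| ≤ ‖x₀''‖ * R := by
        calc |x₀'' (y n)| = ‖x₀'' (y n)‖ := rfl
          _ ≤ ‖x₀''‖ * ‖y n‖ := x₀''.le_opNorm _
          _ ≤ ‖x₀''‖ * R := by
              apply mul_le_mul_of_nonneg_left (hynorm n) (norm_nonneg x₀'')
      linarith [neg_abs_le (x₀'' (y n)), h1]
    have hub : ∀ n, x₀'' (y n) ≤ α := by
      intro n
      have h1 : x₀'' (y n) = x₀'' x₀' - M * x₀'' (u n) := by
        simp [hydef, map_add, map_smul, smul_eq_mul]; ring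
      have h2 : M * (1/2) ≤ M * x₀'' (u n) :=
        mul_le_mul_of_nonneg_left (huhalf n) hMpos.le
      have h3 : M * (1/2) = x₀'' x₀' - α := by rw [hMdef]; ring
      rw [h1]
      linarith
    refine Filter.liminf_le_of_le (isBoundedUnder_of ⟨-(‖x₀''‖ * R), fun n => hbound n⟩) ?_
    intro b hb
    obtain ⟨n, h1, h2⟩ := (hb.and (Eventually.of_forall hub)).exists
    exact le_trans h1 h2
  · -- limits on A
    intro x hx
    refine ⟨x₀' x, ?_, ?_⟩
    · have h1 : Tendsto (fun k => x₀' x + (-M) * u k x) atTop (nhds (x₀' x + (-M) * 0)) :=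
        tendsto_const_nhds.add ((hu0 x).const_mul (-M))
      have h2 : (fun k => x₀' x + (-M) * u k x) = fun k => y k x := by
        funext k; rw [hyval]; ring
      rw [h2] at h1
      simpa using h1
    · have := hsepA x hx
      rw [hβdef]
      linarith
end
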